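/- Let ε > 0, b = e^{−ε}, and φ : {0,...,n} → (0,1). The following are equivalent: (1) there exists m ∈ (0,1) with φ₀ = m and φ_x = min{e^ε φ_{x−1}, 1 − e^{−ε}(1 − φ_{x−1})} for x = 1,...,n; (2) there exists m ∈ (0,1) with φ₀ = m and φ_x = e^ε φ_{x−1} if φ_{x−1} ≤ 1/(1+e^ε), and φ_x = 1 − e^{−ε}(1 − φ_{x−1}) if φ_{x−1} > 1/(1+e^ε); (3) there exists m ∈ ℝ such that φ_x = F_{N₀}(x − m) for all x, where N₀ ~ Tulap(0, b, 0). -/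

import Mathlib

open Real

/-- cdf of `Tulap(0,b,0)`, the distribution of `DLap(b) + Unif(-1/2,1/2)`. -/
noncomputable def tulapCdf0 (b : ℝ) (x : ℝ) : ℝ :=
  if x ≤ 0 then b ^ (-(round x)) / (1 + b) * (b + (x - round x + 1/2) * (1 - b))
  else 1 - b ^ (round x) / (1 + b) * (b + ((round x : ℝ) - x + 1/2) * (1 - b))

lemma tulap_lin {b : ℝ} (hb0 : 0 < b) (hb1 : b < 1) {y : ℝ} (h1 : -(1/2) ≤ y) (h2 : y ≤ 1/2) :
    tulapCdf0 b y = (b + (y + 1/2) * (1 - b)) / (1 + b) := by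
  have hb : (0:ℝ) < 1 + b := by linarith
  rcases lt_or_eq_of_le h2 with h2' | h2'
  · have hr : round y = 0 := by
      rw [round_eq, Int.floor_eq_zero_iff]
      constructor
      · simpa using by linarith
      · simpa using by linarith
    by_cases hy : y ≤ 0
    · rw [tulapCdf0, if_pos hy, hr]
      norm_num
      ring
    · rw [tulapCdf0, if_neg hy, hr]
      push_cast
      norm_num
      field_simp
      ring
  · subst h2'
    have hr : round ((1:ℝ)/2) = 1 := by norm_num [round_eq]
    rw [tulapCdf0, if_neg (by norm_num), hr]
    push_cast
    field_simp
    ring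

lemma tulap_stepA {b : ℝ} (hb0 : 0 < b) (hb1 : b < 1) {y : ℝ} (h : y ≤ -(1/2)) :
    tulapCdf0 b (y + 1) = tulapCdf0 b y / b := by
  have hb : (0:ℝ) < 1 + b := by linarith
  by_cases h1 : y + 1 ≤ 0
  · have hy0 : y ≤ 0 := by linarith
    have hr : round (y + 1) = round y + 1 := round_add_one y
    rw [tulapCdf0, if_pos h1, hr, tulapCdf0, if_pos hy0]
    have hz : b ^ (-(round y + 1)) = b ^ (-(round y)) / b := by
      rw [show -(round y + 1) = -(round y) + (-1) by ring, zpow_add₀ hb0.ne', zpow_neg_one,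
        div_eq_mul_inv]
    rw [hz]
    push_cast
    ring
  · push_neg at h1
    rcases lt_or_eq_of_le h with h' | h'
    · have hr : round y = -1 := by
        have : (⌊y + 1/2⌋ : ℤ) = -1 := by
          apply Int.floor_eq_iff.mpr
          constructor <;> push_cast <;> linarith
        rw [round_eq, this]
      have hlin : tulapCdf0 b (y + 1) = (b + (y + 1 + 1/2) * (1 - b)) / (1 + b) :=
        tulap_lin hb0 hb1 (by linarith) (by linarith)
      rw [hlin, tulapCdf0, if_pos (by linarith : y ≤ 0), hr]
      push_cast
      field_simp
      ring
    · subst h'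
      have hA : tulapCdf0 b (-(1/2) + 1) = (b + (-(1/2) + 1 + 1/2) * (1 - b)) / (1 + b) :=
        tulap_lin hb0 hb1 (by norm_num) (by norm_num)
      have hB : tulapCdf0 b (-(1/2)) = (b + (-(1/2) + 1/2) * (1 - b)) / (1 + b) :=
        tulap_lin hb0 hb1 (by norm_num) (by norm_num)
      rw [hA, hB]
      field_simp
      ring

lemma tulap_le {b : ℝ} (hb0 : 0 < b) (hb1 : b < 1) {y : ℝ} (h : y ≤ -(1/2)) :
    tulapCdf0 b y ≤ b / (1 + b) := by
  have hb : (0:ℝ) < 1 + b := by linarith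
  rcases lt_or_eq_of_le h with h' | h'
  · have hk : round y ≤ -1 := by
      have : ⌊y + 1/2⌋ < 0 := Int.floor_lt.mpr (by push_cast; linarith)
      rw [round_eq]
      omega
    have hfl1 : (round y : ℝ) ≤ y + 1/2 := by rw [round_eq]; exact_mod_cast Int.floor_le _
    have hfl2 : y + 1/2 < (round y : ℝ) + 1 := by
      rw [round_eq]; push_cast; exact Int.lt_floor_add_one _
    rw [tulapCdf0, if_pos (by linarith : y ≤ 0)]
    have hzp : b ^ (-(round y)) ≤ b := by
      calc b ^ (-(round y)) ≤ b ^ (1:ℤ) :=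
            zpow_le_zpow_right_of_le_one₀ hb0 hb1.le (by omega)
        _ = b := zpow_one b
    have hbr0 : 0 ≤ b + (y - round y + 1/2) * (1 - b) := by nlinarith
    have hbr1 : b + (y - round y + 1/2) * (1 - b) ≤ 1 := by nlinarith
    have hzp0 : (0:ℝ) ≤ b ^ (-(round y)) := le_of_lt (zpow_pos hb0 _)
    have key : b ^ (-(round y)) * (b + (y - round y + 1/2) * (1 - b)) ≤ b := by
      calc b ^ (-(round y)) * (b + (y - round y + 1/2) * (1 - b)) ≤ b * 1 :=
            mul_le_mul hzp hbr1 hbr0 hb0.le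
        _ = b := mul_one b
    rw [div_mul_eq_mul_div]
    gcongr
  · subst h'
    rw [tulap_lin hb0 hb1 (by norm_num) (by norm_num)]
    norm_num

lemma tulap_stepB {b : ℝ} (hb0 : 0 < b) (hb1 : b < 1) {y : ℝ} (h : -(1/2) < y) :
    tulapCdf0 b (y + 1) = 1 - b * (1 - tulapCdf0 b y) := by
  have hb : (0:ℝ) < 1 + b := by linarith
  by_cases hy : y ≤ 0
  · have hB : tulapCdf0 b y = (b + (y + 1/2) * (1 - b)) / (1 + b) :=
      tulap_lin hb0 hb1 h.le (by linarith)
    have hr : round (y + 1) = 1 := by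
      have : (⌊y + 1 + 1/2⌋ : ℤ) = 1 := by
        apply Int.floor_eq_iff.mpr
        constructor <;> push_cast <;> linarith
      rw [round_eq, this]
    rw [tulapCdf0, if_neg (by linarith), hr, hB]
    push_cast
    field_simp
    ring
  · push_neg at hy
    have hr : round (y + 1) = round y + 1 := round_add_one y
    rw [tulapCdf0, if_neg (by linarith), hr, tulapCdf0, if_neg (by linarith)]
    have hz : b ^ (round y + 1) = b ^ (round y) * b := zpow_add_one₀ hb0.ne' _
    rw [hz]
    push_cast
    ring

lemma tulap_gt {b : ℝ} (hb0 : 0 < b) (hb1 : b < 1) {y : ℝ} (h : -(1/2) < y) :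
    b / (1 + b) < tulapCdf0 b y := by
  have hb : (0:ℝ) < 1 + b := by linarith
  by_cases hy : y ≤ 1/2
  · rw [tulap_lin hb0 hb1 h.le hy, div_lt_div_iff₀ hb hb]
    nlinarith [mul_pos (by linarith : (0:ℝ) < y + 1/2) (by linarith : (0:ℝ) < 1 - b)]
  · push_neg at hy
    have hfl1 : (round y : ℝ) ≤ y + 1/2 := by rw [round_eq]; exact_mod_cast Int.floor_le _
    have hfl2 : y + 1/2 < (round y : ℝ) + 1 := by
      rw [round_eq]; push_cast; exact Int.lt_floor_add_one _
    have hk : 1 ≤ round y := by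
      rw [round_eq]
      exact Int.le_floor.mpr (by push_cast; linarith)
    have hzp : b ^ (round y) ≤ b := by
      calc b ^ (round y) ≤ b ^ (1:ℤ) :=
            zpow_le_zpow_right_of_le_one₀ hb0 hb1.le hk
        _ = b := zpow_one b
    have hzp0 : (0:ℝ) ≤ b ^ (round y) := le_of_lt (zpow_pos hb0 _)
    have hbr0 : 0 ≤ b + ((round y : ℝ) - y + 1/2) * (1 - b) := by nlinarith
    have hbr1 : b + ((round y : ℝ) - y + 1/2) * (1 - b) ≤ 1 := by nlinarith
    have key : b ^ (round y) * (b + ((round y : ℝ) - y + 1/2) * (1 - b)) ≤ b := by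
      calc b ^ (round y) * (b + ((round y : ℝ) - y + 1/2) * (1 - b)) ≤ b * 1 :=
            mul_le_mul hzp hbr1 hbr0 hb0.le
        _ = b := mul_one b
    rw [tulapCdf0, if_neg (by linarith), div_mul_eq_mul_div]
    have h2 : b ^ (round y) * (b + ((round y : ℝ) - y + 1/2) * (1 - b)) / (1 + b) ≤ b / (1 + b) := by
      gcongr
    have h3 : b / (1 + b) + b / (1 + b) < 1 := by
      rw [← add_div, div_lt_one hb]; linarith
    linarith

lemma tulap_stepIf {b : ℝ} (hb0 : 0 < b) (hb1 : b < 1) (y : ℝ) :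
    tulapCdf0 b (y + 1) =
      if tulapCdf0 b y ≤ b / (1 + b) then tulapCdf0 b y / b
      else 1 - b * (1 - tulapCdf0 b y) := by
  by_cases h : y ≤ -(1/2)
  · rw [if_pos (tulap_le hb0 hb1 h)]
    exact tulap_stepA hb0 hb1 h
  · push_neg at h
    rw [if_neg (not_le.mpr (tulap_gt hb0 hb1 h))]
    exact tulap_stepB hb0 hb1 h

lemma tulap_desc {b : ℝ} (hb0 : 0 < b) (hb1 : b < 1) {y : ℝ} (h : y ≤ 1/2) (j : ℕ) :
    tulapCdf0 b (y - j) = b ^ j * tulapCdf0 b y := by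
  induction j with
  | zero => simp
  | succ k ih =>
    have hle : y - ((k:ℝ) + 1) ≤ -(1/2) := by
      have : (0:ℝ) ≤ k := Nat.cast_nonneg k
      linarith
    have hstep := tulap_stepA hb0 hb1 hle
    have heq : y - ((k:ℝ) + 1) + 1 = y - k := by ring
    rw [heq] at hstep
    have hcast : ((k+1:ℕ):ℝ) = (k:ℝ) + 1 := by push_cast; ring
    rw [hcast]
    have : tulapCdf0 b (y - ((k:ℝ)+1)) = b * tulapCdf0 b (y - k) := by
      rw [hstep]
      field_simp
    rw [this, ih, pow_succ]
    ring

lemma tulap_asc {b : ℝ} (hb0 : 0 < b) (hb1 : b < 1) {y : ℝ} (h : -(1/2) < y) (j : ℕ) :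
    1 - tulapCdf0 b (y + j) = b ^ j * (1 - tulapCdf0 b y) := by
  induction j with
  | zero => simp
  | succ k ih =>
    have hgt : -(1/2) < y + (k:ℝ) := by
      have : (0:ℝ) ≤ k := Nat.cast_nonneg k
      linarith
    have hstep := tulap_stepB hb0 hb1 hgt
    have hcast : ((k+1:ℕ):ℝ) = (k:ℝ) + 1 := by push_cast; ring
    rw [hcast, show y + ((k:ℝ) + 1) = y + (k:ℝ) + 1 by ring, hstep,
      show 1 - (1 - b * (1 - tulapCdf0 b (y + k))) = b * (1 - tulapCdf0 b (y + k)) by ring,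
      ih, pow_succ]
    ring

lemma tulap_surj {b : ℝ} (hb0 : 0 < b) (hb1 : b < 1) {t : ℝ} (ht0 : 0 < t) (ht1 : t < 1) :
    ∃ y, tulapCdf0 b y = t := by
  have hb : (0:ℝ) < 1 + b := by linarith
  have h1b : (0:ℝ) < 1 - b := by linarith
  have hlogb : Real.log b < 0 := Real.log_neg hb0 hb1
  by_cases hc : t ≤ 1 / (1 + b)
  · -- lower tail
    have hc' : (1 + b) * t ≤ 1 := by rw [le_div_iff₀ hb] at hc; linarith
    set c : ℝ := (1 + b) * t with hcdef
    have hc0 : 0 < c := by positivity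
    set L : ℝ := Real.log c / Real.log b with hLdef
    have hL0 : 0 ≤ L := by
      rw [hLdef, le_div_iff_of_neg hlogb, zero_mul]
      exact Real.log_nonpos hc0.le hc'
    set j : ℕ := ⌊L⌋₊ with hjdef
    have hj1 : (j : ℝ) ≤ L := Nat.floor_le hL0
    have hj2 : L < (j : ℝ) + 1 := Nat.lt_floor_add_one L
    have hlogc : Real.log c = L * Real.log b := by
      rw [hLdef, div_mul_cancel₀ _ hlogb.ne]
    have hpowpos : (0:ℝ) < b ^ j := pow_pos hb0 j
    have hup : c ≤ b ^ j := by
      rw [← Real.exp_log hc0, ← Real.exp_log hpowpos]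
      apply Real.exp_le_exp.mpr
      rw [Real.log_pow, hlogc]
      nlinarith
    have hlo : b ^ (j+1) < c := by
      rw [← Real.exp_log hc0, ← Real.exp_log (pow_pos hb0 (j+1))]
      apply Real.exp_lt_exp.mpr
      rw [Real.log_pow, hlogc]
      push_cast
      nlinarith
    set t' : ℝ := t / b ^ j with ht'def
    have ht'le : t' * (1 + b) ≤ 1 := by
      rw [ht'def, div_mul_eq_mul_div, div_le_one hpowpos]
      calc t * (1 + b) = c := by rw [hcdef]; ring
        _ ≤ b ^ j := hup
    have ht'gt : b < t' * (1 + b) := by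
      rw [ht'def, div_mul_eq_mul_div, lt_div_iff₀ hpowpos]
      calc b * b ^ j = b ^ (j+1) := by ring
        _ < c := hlo
        _ = t * (1 + b) := by rw [hcdef]; ring
    set y' : ℝ := (t' * (1 + b) - b) / (1 - b) - 1/2 with hy'def
    have hy'1 : -(1/2) < y' := by
      rw [hy'def]
      have : 0 < (t' * (1 + b) - b) / (1 - b) := div_pos (by linarith) h1b
      linarith
    have hy'2 : y' ≤ 1/2 := by
      rw [hy'def]
      have : (t' * (1 + b) - b) / (1 - b) ≤ 1 := by
        rw [div_le_one h1b]; linarith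
      linarith
    have hF : tulapCdf0 b y' = t' := by
      rw [tulap_lin hb0 hb1 hy'1.le hy'2, hy'def]
      field_simp
      ring
    refine ⟨y' - j, ?_⟩
    rw [tulap_desc hb0 hb1 hy'2 j, hF, ht'def]
    field_simp
  · -- upper tail
    push_neg at hc
    have hc' : 1 < (1 + b) * t := by rw [div_lt_iff₀ hb] at hc; linarith
    set c : ℝ := (1 + b) * (1 - t) with hcdef
    have hc0 : 0 < c := by rw [hcdef]; exact mul_pos hb (by linarith)
    have hcb : c < b := by rw [hcdef]; nlinarith
    set L : ℝ := Real.log c / Real.log b with hLdef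
    have hL1 : 1 < L := by
      rw [hLdef, lt_div_iff_of_neg hlogb, one_mul]
      exact Real.log_lt_log hc0 hcb
    have hceil : 1 < ⌈L⌉₊ := Nat.lt_ceil.mpr (by exact_mod_cast hL1)
    set j : ℕ := ⌈L⌉₊ - 1 with hjdef
    have hjsucc : j + 1 = ⌈L⌉₊ := by omega
    have hj1 : (j : ℝ) < L := Nat.lt_ceil.mp (by omega)
    have hj2 : L ≤ (j : ℝ) + 1 := by
      have := Nat.le_ceil L
      rw [← hjsucc] at this
      exact_mod_cast this
    have hlogc : Real.log c = L * Real.log b := by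
      rw [hLdef, div_mul_cancel₀ _ hlogb.ne]
    have hpowpos : (0:ℝ) < b ^ j := pow_pos hb0 j
    have hup : c < b ^ j := by
      rw [← Real.exp_log hc0, ← Real.exp_log hpowpos]
      apply Real.exp_lt_exp.mpr
      rw [Real.log_pow, hlogc]
      nlinarith
    have hlo : b ^ (j+1) ≤ c := by
      rw [← Real.exp_log hc0, ← Real.exp_log (pow_pos hb0 (j+1))]
      apply Real.exp_le_exp.mpr
      rw [Real.log_pow, hlogc]
      push_cast
      nlinarith
    set t' : ℝ := 1 - (1 - t) / b ^ j with ht'def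
    have hkey : (1 - t') * b ^ j = 1 - t := by
      rw [ht'def]
      field_simp
      ring
    have ht'le : t' * (1 + b) ≤ 1 := by
      have h1 : b * b ^ j ≤ (1 - t') * b ^ j * (1 + b) := by
        rw [hkey]
        calc b * b ^ j = b ^ (j+1) := by ring
          _ ≤ c := hlo
          _ = (1 - t) * (1 + b) := by rw [hcdef]; ring
      nlinarith
    have ht'gt : b < t' * (1 + b) := by
      have h1 : (1 - t') * b ^ j * (1 + b) < b ^ j := by
        rw [hkey]
        calc (1 - t) * (1 + b) = c := by rw [hcdef]; ring
          _ < b ^ j := hup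
      nlinarith
    set y' : ℝ := (t' * (1 + b) - b) / (1 - b) - 1/2 with hy'def
    have hy'1 : -(1/2) < y' := by
      rw [hy'def]
      have : 0 < (t' * (1 + b) - b) / (1 - b) := div_pos (by linarith) h1b
      linarith
    have hy'2 : y' ≤ 1/2 := by
      rw [hy'def]
      have : (t' * (1 + b) - b) / (1 - b) ≤ 1 := by
        rw [div_le_one h1b]; linarith
      linarith
    have hF : tulapCdf0 b y' = t' := by
      rw [tulap_lin hb0 hb1 hy'1.le hy'2, hy'def]
      field_simp
      ring
    refine ⟨y' + j, ?_⟩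
    have := tulap_asc hb0 hb1 hy'1 j
    rw [hF] at this
    have : 1 - tulapCdf0 b (y' + j) = 1 - t := by
      rw [this, mul_comm, hkey]
    linarith

lemma min_ite_aux {E t : ℝ} (hE : 1 < E) :
    min (E * t) (1 - E⁻¹ * (1 - t)) =
      if t ≤ 1 / (1 + E) then E * t else 1 - E⁻¹ * (1 - t) := by
  have hE0 : 0 < E := by linarith
  have h1E : (0:ℝ) < 1 + E := by linarith
  have hinv : 1 - E⁻¹ * (1 - t) = (E - (1 - t)) / E := by
    field_simp
  split_ifs with h
  · apply min_eq_left
    have h' : t * (1 + E) ≤ 1 := by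
      rw [← le_div_iff₀ h1E]; exact h
    rw [hinv, le_div_iff₀ hE0]
    nlinarith [mul_nonneg (by linarith : (0:ℝ) ≤ E - 1) (by linarith : (0:ℝ) ≤ 1 - t * (1 + E))]
  · apply min_eq_right
    push_neg at h
    have h' : 1 < t * (1 + E) := by
      rw [← div_lt_iff₀ h1E]; exact h
    rw [hinv, div_le_iff₀ hE0]
    nlinarith [mul_nonneg (by linarith : (0:ℝ) ≤ E - 1) (by linarith : (0:ℝ) ≤ t * (1 + E) - 1)]


/-- three equivalent characterizations of the extremal (ε,0)-DP test:
the `min` recurrence, the case-split recurrence, and the Tulap(0, e^(-ε), 0) cdf form. -/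
theorem dp_recurrence_tfae (ε : ℝ) (hε : 0 < ε) (n : ℕ) (φ : ℕ → ℝ)
    (hφ : ∀ x ≤ n, φ x ∈ Set.Ioo (0:ℝ) 1) :
    ((∃ m ∈ Set.Ioo (0:ℝ) 1, φ 0 = m ∧ ∀ x, 1 ≤ x → x ≤ n →
        φ x = min (Real.exp ε * φ (x-1)) (1 - Real.exp (-ε) * (1 - φ (x-1)))) ↔
      (∃ m ∈ Set.Ioo (0:ℝ) 1, φ 0 = m ∧ ∀ x, 1 ≤ x → x ≤ n →
        φ x = if φ (x-1) ≤ 1 / (1 + Real.exp ε) then Real.exp ε * φ (x-1)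
              else 1 - Real.exp (-ε) * (1 - φ (x-1))))
    ∧
    ((∃ m ∈ Set.Ioo (0:ℝ) 1, φ 0 = m ∧ ∀ x, 1 ≤ x → x ≤ n →
        φ x = if φ (x-1) ≤ 1 / (1 + Real.exp ε) then Real.exp ε * φ (x-1)
              else 1 - Real.exp (-ε) * (1 - φ (x-1))) ↔
      (∃ m : ℝ, ∀ x ≤ n, φ x = tulapCdf0 (Real.exp (-ε)) ((x : ℝ) - m))) := by
  have hE1 : 1 < Real.exp ε := by
    rw [show (1:ℝ) = Real.exp 0 by simp]
    exact Real.exp_lt_exp.mpr hε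
  have hb0 : 0 < Real.exp (-ε) := Real.exp_pos _
  have hb1 : Real.exp (-ε) < 1 := by
    rw [show (1:ℝ) = Real.exp 0 by simp]
    exact Real.exp_lt_exp.mpr (by linarith)
  have hbE : Real.exp (-ε) * Real.exp ε = 1 := by
    rw [← Real.exp_add]; simp
  have hbdiv : 1 / (1 + Real.exp ε) = Real.exp (-ε) / (1 + Real.exp (-ε)) := by
    rw [div_eq_div_iff (by positivity) (by positivity)]
    nlinarith
  have hmul : ∀ t : ℝ, Real.exp ε * t = t / Real.exp (-ε) := by
    intro t
    rw [eq_div_iff hb0.ne']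
    linear_combination t * hbE
  constructor
  · constructor
    · rintro ⟨m, hm, h0, hrec⟩
      refine ⟨m, hm, h0, fun x hx1 hx2 => ?_⟩
      rw [hrec x hx1 hx2, Real.exp_neg, min_ite_aux hE1]
    · rintro ⟨m, hm, h0, hrec⟩
      refine ⟨m, hm, h0, fun x hx1 hx2 => ?_⟩
      rw [hrec x hx1 hx2, Real.exp_neg, min_ite_aux hE1]
  · constructor
    · rintro ⟨m0, hm0, h0, hrec⟩
      obtain ⟨y0, hy0⟩ := tulap_surj hb0 hb1 hm0.1 hm0.2
      refine ⟨-y0, ?_⟩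
      intro x
      induction x with
      | zero =>
        intro _
        rw [show ((0:ℕ):ℝ) - -y0 = y0 by push_cast; ring, hy0, h0]
      | succ k ih =>
        intro hx
        have ihk := ih (by omega)
        have hr := hrec (k+1) (by omega) hx
        simp only [Nat.add_sub_cancel] at hr
        rw [hr, ihk, hbdiv, hmul,
          show ((k+1:ℕ):ℝ) - -y0 = ((k:ℕ):ℝ) - -y0 + 1 by push_cast; ring,
          tulap_stepIf hb0 hb1]
    · rintro ⟨m, hrec⟩
      refine ⟨φ 0, hφ 0 (Nat.zero_le n), rfl, ?_⟩
      intro x hx1 hx2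
      have h2 : φ (x-1) = tulapCdf0 (Real.exp (-ε)) (((x-1:ℕ):ℝ) - m) :=
        hrec _ (le_trans (Nat.sub_le x 1) hx2)
      have h1 : φ x = tulapCdf0 (Real.exp (-ε)) ((x:ℝ) - m) := hrec x hx2
      have hcast : ((x:ℕ):ℝ) - m = (((x-1:ℕ):ℝ) - m) + 1 := by
        rw [Nat.cast_sub hx1]
        push_cast
        ring
      rw [h1, hcast, tulap_stepIf hb0 hb1, ← h2, hbdiv, hmul]
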